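/- If φ : [0,T] → V is γ-Hölder continuous on [0,T] and h ∈ (0,T], then the Hölder seminorm of φ on the whole interval satisfies ‖φ‖_{γ,[0,T]} ≤ ‖φ‖_{γ;h} · (⌊T/h⌋ + 1)^{1−γ}, where ‖φ‖_{γ;h} := sup over subintervals [s,t] ⊆ [0,T] with t − s ≤ h of the γ-Hölder seminorm of φ on [s,t]. -/

import Mathlib

open Set

/-- If `φ : [0,T] → V` satisfies the `γ`-Hölder bound with constant `C` on every
subinterval of length at most `h`, then on the whole of `[0,T]` it satisfies the
`γ`-Hölder bound with constant `C * (⌊T/h⌋ + 1)^(1-γ)`.  This expresses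
`‖φ‖_{γ,[0,T]} ≤ ‖φ‖_{γ;h} · (⌊T/h⌋ + 1)^{1-γ}`. -/
theorem holder_seminorm_subinterval_bound
    {V : Type*} [NormedAddCommGroup V] [NormedSpace ℝ V]
    (T h γ : ℝ) (hT : 0 < T) (hh0 : 0 < h) (hhT : h ≤ T)
    (hγ0 : 0 < γ) (hγ1 : γ ≤ 1)
    (φ : ℝ → V) (C : ℝ) (hC : 0 ≤ C)
    (hloc : ∀ s t : ℝ, 0 ≤ s → s ≤ t → t ≤ T → t - s ≤ h →
      ‖φ t - φ s‖ ≤ C * (t - s) ^ γ) :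
    ∀ s t : ℝ, 0 ≤ s → s ≤ t → t ≤ T →
      ‖φ t - φ s‖ ≤ C * ((⌊T / h⌋₊ : ℝ) + 1) ^ (1 - γ) * (t - s) ^ γ := by
  intro s t hs hst htT
  set N : ℕ := ⌊T / h⌋₊ + 1 with hN
  have hNpos : (0:ℝ) < N := by positivity
  have hTN : T < N * h := by
    have h1 : T / h < (N : ℝ) := by
      have := Nat.lt_floor_add_one (T / h)
      push_cast [hN]
      linarith
    calc T = (T / h) * h := by field_simp
    _ < N * h := by exact mul_lt_mul_of_pos_right h1 hh0
  set δ : ℝ := (t - s) / N with hδ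
  have hδ0 : 0 ≤ δ := by
    apply div_nonneg (by linarith) (le_of_lt hNpos)
  have hδh : δ ≤ h := by
    rw [hδ, div_le_iff₀ hNpos]
    calc t - s ≤ T := by linarith
    _ ≤ h * N := by rw [mul_comm]; linarith
  have hcast : ((⌊T / h⌋₊ : ℝ) + 1) = (N:ℝ) := by rw [hN]; push_cast; ring
  -- telescoping
  have hkey : φ t - φ s = ∑ i ∈ Finset.range N, (φ (s + (↑(i+1)) * δ) - φ (s + (i:ℝ) * δ)) := by
    rw [Finset.sum_range_sub (fun i => φ (s + (i:ℝ) * δ))]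
    congr 2
    · rw [hδ]; field_simp; ring
    · simp
  have hterm : ∀ i ∈ Finset.range N, ‖φ (s + (↑(i+1)) * δ) - φ (s + (i:ℝ) * δ)‖ ≤ C * δ ^ γ := by
    intro i hi
    have hiN : (i:ℝ) + 1 ≤ N := by
      have := Finset.mem_range.mp hi
      exact_mod_cast this
    have h1 : 0 ≤ s + (i:ℝ) * δ := by positivity
    have h2 : s + (i:ℝ) * δ ≤ s + (↑(i+1)) * δ := by push_cast; nlinarith
    have h3 : s + (↑(i+1):ℝ) * δ ≤ T := by
      have hNδ : (N:ℝ) * δ = t - s := by rw [hδ]; field_simp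
      push_cast
      nlinarith
    have h4 : s + (↑(i+1):ℝ) * δ - (s + (i:ℝ) * δ) = δ := by push_cast; ring
    have := hloc _ _ h1 h2 h3 (by rw [h4]; exact hδh)
    rwa [h4] at this
  have hsum : ‖φ t - φ s‖ ≤ N * (C * δ ^ γ) := by
    rw [hkey]
    calc ‖∑ i ∈ Finset.range N, (φ (s + (↑(i+1)) * δ) - φ (s + (i:ℝ) * δ))‖
        ≤ ∑ i ∈ Finset.range N, ‖φ (s + (↑(i+1)) * δ) - φ (s + (i:ℝ) * δ)‖ :=
          norm_sum_le _ _
      _ ≤ ∑ i ∈ Finset.range N, C * δ ^ γ := Finset.sum_le_sum hterm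
      _ = N * (C * δ ^ γ) := by rw [Finset.sum_const, Finset.card_range, nsmul_eq_mul]
  refine hsum.trans_eq ?_
  have hδγ : δ ^ γ = (t - s) ^ γ / (N:ℝ) ^ γ := by
    rw [hδ, Real.div_rpow (by linarith) (le_of_lt hNpos)]
  have hNγne : ((N:ℝ)) ^ γ ≠ 0 := by positivity
  have hNdiv : ((N:ℝ)) ^ (1 - γ) = (N:ℝ) / (N:ℝ) ^ γ := by
    rw [eq_div_iff hNγne, ← Real.rpow_add hNpos]
    simp
  rw [hδγ, hcast, hNdiv]
  field_simp
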